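/- arXiv:1505.07404 — 5 statements merged into one kernel-verified Lean document; each statement's English description precedes it below -/
import Mathlib

section
/- Let p be a real number with 1 ≤ p. Let φ(z) = λ₁(z − a₁)/(1 − conj(a₁)·z) and ψ(z) = λ₂(z − a₂)/(1 − conj(a₂)·z) be automorphisms of D (a₁, a₂ ∈ D, |λ₁| = |λ₂| = 1), and suppose ψ ∘ φ is written as (ψ ∘ φ)(z) = λ₃(z − a₃)/(1 − conj(a₃)·z) with a₃ ∈ D and |λ₃| = 1. Then there exists ρ ∈ ℂ with |ρ| = 1 such that for all z ∈ D: (conj(λ₁)·φ'(z))^(1/p) · (conj(λ₂)·ψ'(φ(z)))^(1/p) = ρ · (conj(λ₃)·(ψ ∘ φ)'(z))^(1/p), where w^(1/p) denotes the principal branch of the complex power (as in Complex.cpow). -/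
open Complex Metric Real

private lemma auxD_ne (a z : ℂ) (ha : ‖a‖ < 1) (hz : ‖z‖ < 1) :
    1 - (starRingEnd ℂ) a * z ≠ 0 := by
  intro h
  have h1 : (starRingEnd ℂ) a * z = 1 := by linear_combination -h
  have h2 := congrArg (fun x : ℂ => ‖x‖) h1
  rw [norm_mul, Complex.norm_conj, norm_one] at h2
  nlinarith [norm_nonneg a, norm_nonneg z]

private lemma auxD_re_pos (a z : ℂ) (ha : ‖a‖ < 1) (hz : ‖z‖ < 1) :
    0 < ((1 - (starRingEnd ℂ) a * z)⁻¹).re := by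
  have habs : ‖(starRingEnd ℂ) a * z‖ < 1 := by
    rw [norm_mul, Complex.norm_conj]
    nlinarith [norm_nonneg a, norm_nonneg z]
  have hre : 0 < (1 - (starRingEnd ℂ) a * z).re := by
    have h1 : ((starRingEnd ℂ) a * z).re ≤ |((starRingEnd ℂ) a * z).re| := le_abs_self _
    have h2 := Complex.abs_re_le_norm ((starRingEnd ℂ) a * z)
    simp only [Complex.sub_re, Complex.one_re]
    linarith
  rw [Complex.inv_re]
  exact div_pos hre (Complex.normSq_pos.mpr (auxD_ne a z ha hz))

private lemma auxD_slit (r : ℝ) (hr : 0 < r) (w : ℂ) (hw : 0 < w.re) :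
    (r : ℂ) * w ^ 2 ∈ Complex.slitPlane := by
  rw [Complex.mem_slitPlane_iff]
  have hre : ((r : ℂ) * w ^ 2).re = r * (w.re * w.re - w.im * w.im) := by
    simp only [pow_two, Complex.mul_re, Complex.mul_im, Complex.ofReal_re, Complex.ofReal_im]
    ring
  have him : ((r : ℂ) * w ^ 2).im = r * (2 * w.re * w.im) := by
    simp only [pow_two, Complex.mul_re, Complex.mul_im, Complex.ofReal_re, Complex.ofReal_im]
    ring
  by_cases h : w.im = 0
  · left
    rw [hre, h]
    have := mul_pos hr (mul_pos hw hw)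
    nlinarith
  · right
    rw [him]
    exact mul_ne_zero (ne_of_gt hr) (mul_ne_zero (mul_ne_zero two_ne_zero (ne_of_gt hw)) h)

private lemma auxD_map (a lam z : ℂ) (ha : ‖a‖ < 1) (hl : ‖lam‖ = 1)
    (hz : ‖z‖ < 1) :
    ‖lam * (z - a) / (1 - (starRingEnd ℂ) a * z)‖ < 1 := by
  rw [norm_div, norm_mul, hl, one_mul, div_lt_one (norm_pos_iff.mpr (auxD_ne a z ha hz))]
  have hz2 : z.re ^ 2 + z.im ^ 2 < 1 := by
    have := Complex.sq_norm z
    rw [Complex.normSq_apply] at this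
    nlinarith [norm_nonneg z]
  have ha2 : a.re ^ 2 + a.im ^ 2 < 1 := by
    have := Complex.sq_norm a
    rw [Complex.normSq_apply] at this
    nlinarith [norm_nonneg a]
  have key : ‖z - a‖ ^ 2 < ‖1 - (starRingEnd ℂ) a * z‖ ^ 2 := by
    rw [Complex.sq_norm, Complex.sq_norm, Complex.normSq_apply, Complex.normSq_apply]
    simp only [Complex.sub_re, Complex.sub_im, Complex.mul_re, Complex.mul_im,
      Complex.one_re, Complex.one_im, RCLike.star_def, Complex.conj_re, Complex.conj_im]
    nlinarith [mul_pos (by linarith : (0:ℝ) < 1 - (z.re ^ 2 + z.im ^ 2))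
      (by linarith : (0:ℝ) < 1 - (a.re ^ 2 + a.im ^ 2))]
  nlinarith [norm_nonneg (z - a), norm_nonneg (1 - (starRingEnd ℂ) a * z)]

private lemma auxD_im (y : ℂ) (n : ℤ) :
    (y + (n : ℂ) * (2 * (Real.pi : ℂ) * Complex.I)).im = y.im + n * (2 * Real.pi) := by
  simp only [Complex.add_im, Complex.mul_im, Complex.mul_re, Complex.intCast_im,
    Complex.intCast_re, Complex.I_im, Complex.I_re, Complex.ofReal_im, Complex.ofReal_re,
    Complex.re_ofNat, Complex.im_ofNat]
  ring

private lemma auxD_deriv (a lam z : ℂ) (h : 1 - (starRingEnd ℂ) a * z ≠ 0) :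
    HasDerivAt (fun w => lam * (w - a) / (1 - (starRingEnd ℂ) a * w))
      (lam * (1 - (starRingEnd ℂ) a * a) * ((1 - (starRingEnd ℂ) a * z)⁻¹) ^ 2) z := by
  have hn : HasDerivAt (fun w : ℂ => lam * (w - a)) lam z := by
    simpa using ((hasDerivAt_id z).sub_const a).const_mul lam
  have hd : HasDerivAt (fun w : ℂ => 1 - (starRingEnd ℂ) a * w) (-(starRingEnd ℂ) a) z := by
    simpa using ((hasDerivAt_id z).const_mul ((starRingEnd ℂ) a)).const_sub 1
  have := (hn.div hd h : HasDerivAt (fun w => lam * (w - a) / (1 - (starRingEnd ℂ) a * w)) _ z)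
  refine this.congr_deriv ?_
  rw [inv_pow]
  ring

/-- For disc automorphisms `φ, ψ` with `ψ ∘ φ` written in standard form with
parameters `a₃, λ₃`, there is a unimodular `ρ` with
`(conj λ₁ · φ')^(1/p) · (conj λ₂ · ψ'∘φ)^(1/p) = ρ · (conj λ₃ · (ψ∘φ)')^(1/p)` on the disc,
where powers are principal branches (`Complex.cpow`). -/
theorem stmt_1 (p : ℝ) (hp : 1 ≤ p)
    (a₁ a₂ a₃ lam₁ lam₂ lam₃ : ℂ)
    (ha₁ : ‖a₁‖ < 1) (ha₂ : ‖a₂‖ < 1) (ha₃ : ‖a₃‖ < 1)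
    (hl₁ : ‖lam₁‖ = 1) (hl₂ : ‖lam₂‖ = 1) (hl₃ : ‖lam₃‖ = 1)
    (φ ψ : ℂ → ℂ)
    (hφ : ∀ z : ℂ, φ z = lam₁ * (z - a₁) / (1 - (starRingEnd ℂ) a₁ * z))
    (hψ : ∀ z : ℂ, ψ z = lam₂ * (z - a₂) / (1 - (starRingEnd ℂ) a₂ * z))
    (hcomp : ∀ z : ℂ, ‖z‖ < 1 →
      ψ (φ z) = lam₃ * (z - a₃) / (1 - (starRingEnd ℂ) a₃ * z)) :
    ∃ ρ : ℂ, ‖ρ‖ = 1 ∧ ∀ z : ℂ, ‖z‖ < 1 →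
      ((starRingEnd ℂ) lam₁ * deriv φ z) ^ (1 / (p : ℂ)) *
          ((starRingEnd ℂ) lam₂ * deriv ψ (φ z)) ^ (1 / (p : ℂ))
        = ρ * ((starRingEnd ℂ) lam₃ * deriv (ψ ∘ φ) z) ^ (1 / (p : ℂ)) := by
  -- abbreviations
  set t : ℂ := 1 / (p : ℂ) with ht
  have hp0 : (0:ℝ) < p := by linarith
  -- the three core functions
  set A : ℂ → ℂ := fun z => ((1 - Complex.normSq a₁ : ℝ) : ℂ) *
      ((1 - (starRingEnd ℂ) a₁ * z)⁻¹) ^ 2 with hA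
  set B : ℂ → ℂ := fun z => ((1 - Complex.normSq a₂ : ℝ) : ℂ) *
      ((1 - (starRingEnd ℂ) a₂ * φ z)⁻¹) ^ 2 with hB
  set C : ℂ → ℂ := fun z => ((1 - Complex.normSq a₃ : ℝ) : ℂ) *
      ((1 - (starRingEnd ℂ) a₃ * z)⁻¹) ^ 2 with hC
  have hr₁ : (0:ℝ) < 1 - Complex.normSq a₁ := by
    rw [← Complex.sq_norm]; nlinarith [norm_nonneg a₁]
  have hr₂ : (0:ℝ) < 1 - Complex.normSq a₂ := by
    rw [← Complex.sq_norm]; nlinarith [norm_nonneg a₂]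
  have hr₃ : (0:ℝ) < 1 - Complex.normSq a₃ := by
    rw [← Complex.sq_norm]; nlinarith [norm_nonneg a₃]
  have hφmem : ∀ z : ℂ, ‖z‖ < 1 → ‖φ z‖ < 1 := by
    intro z hz; rw [hφ z]; exact auxD_map a₁ lam₁ z ha₁ hl₁ hz
  -- slitPlane membership
  have hAslit : ∀ z : ℂ, ‖z‖ < 1 → A z ∈ Complex.slitPlane := fun z hz =>
    auxD_slit _ hr₁ _ (auxD_re_pos a₁ z ha₁ hz)
  have hBslit : ∀ z : ℂ, ‖z‖ < 1 → B z ∈ Complex.slitPlane := fun z hz =>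
    auxD_slit _ hr₂ _ (auxD_re_pos a₂ (φ z) ha₂ (hφmem z hz))
  have hCslit : ∀ z : ℂ, ‖z‖ < 1 → C z ∈ Complex.slitPlane := fun z hz =>
    auxD_slit _ hr₃ _ (auxD_re_pos a₃ z ha₃ hz)
  have hAne : ∀ z : ℂ, ‖z‖ < 1 → A z ≠ 0 := fun z hz =>
    Complex.slitPlane_ne_zero (hAslit z hz)
  have hBne : ∀ z : ℂ, ‖z‖ < 1 → B z ≠ 0 := fun z hz =>
    Complex.slitPlane_ne_zero (hBslit z hz)
  have hCne : ∀ z : ℂ, ‖z‖ < 1 → C z ≠ 0 := fun z hz =>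
    Complex.slitPlane_ne_zero (hCslit z hz)
  -- unimodular conjugate products
  have hlc₁ : (starRingEnd ℂ) lam₁ * lam₁ = 1 := by
    rw [mul_comm, Complex.mul_conj, ← Complex.sq_norm, hl₁]; norm_num
  have hlc₂ : (starRingEnd ℂ) lam₂ * lam₂ = 1 := by
    rw [mul_comm, Complex.mul_conj, ← Complex.sq_norm, hl₂]; norm_num
  have hlc₃ : (starRingEnd ℂ) lam₃ * lam₃ = 1 := by
    rw [mul_comm, Complex.mul_conj, ← Complex.sq_norm, hl₃]; norm_num
  have hnsq₁ : ((starRingEnd ℂ) a₁) * a₁ = ((Complex.normSq a₁ : ℝ) : ℂ) := by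
    rw [mul_comm, Complex.mul_conj]
  have hnsq₂ : ((starRingEnd ℂ) a₂) * a₂ = ((Complex.normSq a₂ : ℝ) : ℂ) := by
    rw [mul_comm, Complex.mul_conj]
  have hnsq₃ : ((starRingEnd ℂ) a₃) * a₃ = ((Complex.normSq a₃ : ℝ) : ℂ) := by
    rw [mul_comm, Complex.mul_conj]
  -- derivatives
  have hφd : ∀ z : ℂ, ‖z‖ < 1 →
      HasDerivAt φ (lam₁ * (1 - (starRingEnd ℂ) a₁ * a₁) *
        ((1 - (starRingEnd ℂ) a₁ * z)⁻¹) ^ 2) z := by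
    intro z hz
    have := auxD_deriv a₁ lam₁ z (auxD_ne a₁ z ha₁ hz)
    rwa [show (fun w => lam₁ * (w - a₁) / (1 - (starRingEnd ℂ) a₁ * w)) = φ from
      (funext fun w => (hφ w).symm)] at this
  have hψd : ∀ w : ℂ, ‖w‖ < 1 →
      HasDerivAt ψ (lam₂ * (1 - (starRingEnd ℂ) a₂ * a₂) *
        ((1 - (starRingEnd ℂ) a₂ * w)⁻¹) ^ 2) w := by
    intro w hw
    have := auxD_deriv a₂ lam₂ w (auxD_ne a₂ w ha₂ hw)
    rwa [show (fun u => lam₂ * (u - a₂) / (1 - (starRingEnd ℂ) a₂ * u)) = ψ from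
      (funext fun u => (hψ u).symm)] at this
  have hAval : ∀ z : ℂ, ‖z‖ < 1 → (starRingEnd ℂ) lam₁ * deriv φ z = A z := by
    intro z hz
    rw [(hφd z hz).deriv, hA]
    rw [show lam₁ * (1 - (starRingEnd ℂ) a₁ * a₁) = lam₁ * ((1 - Complex.normSq a₁ : ℝ) : ℂ) by
      rw [hnsq₁]; push_cast; ring]
    rw [← mul_assoc, ← mul_assoc, hlc₁, one_mul]
  have hBval : ∀ z : ℂ, ‖z‖ < 1 → (starRingEnd ℂ) lam₂ * deriv ψ (φ z) = B z := by
    intro z hz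
    rw [(hψd (φ z) (hφmem z hz)).deriv, hB]
    rw [show lam₂ * (1 - (starRingEnd ℂ) a₂ * a₂) = lam₂ * ((1 - Complex.normSq a₂ : ℝ) : ℂ) by
      rw [hnsq₂]; push_cast; ring]
    rw [← mul_assoc, ← mul_assoc, hlc₂, one_mul]
  -- derivative of the composition, two ways
  have hcompd : ∀ z : ℂ, ‖z‖ < 1 →
      deriv (ψ ∘ φ) z = lam₃ * (1 - (starRingEnd ℂ) a₃ * a₃) *
        ((1 - (starRingEnd ℂ) a₃ * z)⁻¹) ^ 2 := by
    intro z hz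
    have hev : (ψ ∘ φ) =ᶠ[nhds z]
        (fun w => lam₃ * (w - a₃) / (1 - (starRingEnd ℂ) a₃ * w)) := by
      have hzmem : z ∈ Metric.ball (0:ℂ) 1 := by
        rw [mem_ball_zero_iff]; exact hz
      filter_upwards [Metric.isOpen_ball.mem_nhds hzmem] with w hw
      rw [Function.comp_apply, hcomp w (mem_ball_zero_iff.mp hw)]
    rw [hev.deriv_eq, (auxD_deriv a₃ lam₃ z (auxD_ne a₃ z ha₃ hz)).deriv]
  have hCval : ∀ z : ℂ, ‖z‖ < 1 → (starRingEnd ℂ) lam₃ * deriv (ψ ∘ φ) z = C z := by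
    intro z hz
    rw [hcompd z hz, hC]
    rw [show lam₃ * (1 - (starRingEnd ℂ) a₃ * a₃) = lam₃ * ((1 - Complex.normSq a₃ : ℝ) : ℂ) by
      rw [hnsq₃]; push_cast; ring]
    rw [← mul_assoc, ← mul_assoc, hlc₃, one_mul]
  -- the key multiplicative relation A * B = c * C
  set c : ℂ := (starRingEnd ℂ) lam₁ * (starRingEnd ℂ) lam₂ * lam₃ with hc
  have hABC : ∀ z : ℂ, ‖z‖ < 1 → A z * B z = c * C z := by
    intro z hz
    have hchain : deriv (ψ ∘ φ) z = deriv ψ (φ z) * deriv φ z := by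
      have h1 := (hψd (φ z) (hφmem z hz)).comp z (hφd z hz)
      rw [h1.deriv, (hψd (φ z) (hφmem z hz)).deriv, (hφd z hz).deriv]
    calc A z * B z = ((starRingEnd ℂ) lam₁ * deriv φ z) *
            ((starRingEnd ℂ) lam₂ * deriv ψ (φ z)) := by
          rw [hAval z hz, hBval z hz]
      _ = (starRingEnd ℂ) lam₁ * (starRingEnd ℂ) lam₂ * deriv (ψ ∘ φ) z := by
          rw [hchain]; ring
      _ = (starRingEnd ℂ) lam₁ * (starRingEnd ℂ) lam₂ * (lam₃ *
            ((starRingEnd ℂ) lam₃ * deriv (ψ ∘ φ) z)) := by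
          have h13 : lam₃ * (starRingEnd ℂ) lam₃ = 1 := by rw [mul_comm]; exact hlc₃
          rw [← mul_assoc lam₃, h13, one_mul]
      _ = c * C z := by rw [hCval z hz, hc]; ring
  -- the log-combination
  set L : ℂ → ℂ := fun z => Complex.log (A z) + Complex.log (B z) - Complex.log (C z) with hL
  have hexpL : ∀ z : ℂ, ‖z‖ < 1 → Complex.exp (L z) = c := by
    intro z hz
    have hLz : L z = Complex.log (A z) + Complex.log (B z) - Complex.log (C z) := rfl
    rw [hLz, Complex.exp_sub, Complex.exp_add, Complex.exp_log (hAne z hz),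
      Complex.exp_log (hBne z hz), Complex.exp_log (hCne z hz), hABC z hz,
      mul_div_assoc, div_self (hCne z hz), mul_one]
  have h0 : ‖(0:ℂ)‖ < 1 := by simp
  -- L is constant on the ball
  have hLcont : ContinuousOn L (Metric.ball (0:ℂ) 1) := by
    have hmem : ∀ z ∈ Metric.ball (0:ℂ) 1, ‖z‖ < 1 := fun z hz =>
      mem_ball_zero_iff.mp hz
    have hφcont : ContinuousOn φ (Metric.ball (0:ℂ) 1) := by
      rw [show φ = (fun z => lam₁ * (z - a₁) / (1 - (starRingEnd ℂ) a₁ * z)) from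
        funext hφ]
      exact ContinuousOn.div
        ((continuous_const.mul (continuous_id.sub continuous_const)).continuousOn)
        ((continuous_const.sub (continuous_const.mul continuous_id)).continuousOn)
        (fun z hz => auxD_ne a₁ z ha₁ (hmem z hz))
    have hAcont : ContinuousOn A (Metric.ball (0:ℂ) 1) := by
      apply ContinuousOn.mul continuousOn_const
      apply ContinuousOn.pow
      exact ContinuousOn.inv₀
        ((continuous_const.sub (continuous_const.mul continuous_id)).continuousOn)
        (fun z hz => auxD_ne a₁ z ha₁ (hmem z hz))
    have hBcont : ContinuousOn B (Metric.ball (0:ℂ) 1) := by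
      apply ContinuousOn.mul continuousOn_const
      apply ContinuousOn.pow
      exact ContinuousOn.inv₀
        (continuousOn_const.sub (continuousOn_const.mul hφcont))
        (fun z hz => auxD_ne a₂ (φ z) ha₂ (hφmem z (hmem z hz)))
    have hCcont : ContinuousOn C (Metric.ball (0:ℂ) 1) := by
      apply ContinuousOn.mul continuousOn_const
      apply ContinuousOn.pow
      exact ContinuousOn.inv₀
        ((continuous_const.sub (continuous_const.mul continuous_id)).continuousOn)
        (fun z hz => auxD_ne a₃ z ha₃ (hmem z hz))
    exact ContinuousOn.sub
      (ContinuousOn.add (hAcont.clog (fun z hz => hAslit z (hmem z hz)))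
        (hBcont.clog (fun z hz => hBslit z (hmem z hz))))
      (hCcont.clog (fun z hz => hCslit z (hmem z hz)))
  have hpre : IsPreconnected (Metric.ball (0:ℂ) 1) := (convex_ball (0:ℂ) 1).isPreconnected
  have hLim : ∀ z : ℂ, ‖z‖ < 1 → ∃ n : ℤ, L z = L 0 + n * (2 * Real.pi * I) := by
    intro z hz
    rw [← Complex.exp_eq_exp_iff_exists_int, hexpL z hz, hexpL 0 h0]
  have hLconst : ∀ z : ℂ, ‖z‖ < 1 → L z = L 0 := by
    intro z hz
    obtain ⟨n, hn⟩ := hLim z hz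
    rcases lt_trichotomy n 0 with hneg | hzero | hpos
    · exfalso
      -- Im (L z) = Im (L 0) + 2πn ≤ Im (L 0) - 2π; find point with value Im L 0 - π
      have hzmem : z ∈ Metric.ball (0:ℂ) 1 := mem_ball_zero_iff.mpr hz
      have h0mem : (0:ℂ) ∈ Metric.ball (0:ℂ) 1 := mem_ball_zero_iff.mpr h0
      have himz : (L z).im = (L 0).im + n * (2 * Real.pi) := by
        rw [hn]; exact auxD_im _ n
      have hival := hpre.intermediate_value hzmem h0mem
        (Complex.continuous_im.comp_continuousOn hLcont)
      have hmemIcc : (L 0).im - Real.pi ∈ Set.Icc ((L z).im) ((L 0).im) := by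
        constructor
        · rw [himz]
          have : (n:ℝ) ≤ -1 := by
            have h' : n ≤ -1 := by omega
            exact_mod_cast h'
          nlinarith [Real.pi_pos]
        · nlinarith [Real.pi_pos]
      obtain ⟨w, hwmem, hw⟩ := hival hmemIcc
      obtain ⟨m, hm⟩ := hLim w (mem_ball_zero_iff.mp hwmem)
      simp only [Function.comp_apply] at hw
      have himw : (L w).im = (L 0).im + m * (2 * Real.pi) := by
        rw [hm]; exact auxD_im _ m
      rw [himw] at hw
      have hπ : (m:ℝ) * (2 * Real.pi) = -Real.pi := by linarith
      have h2m : (2 * m : ℝ) = -1 := by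
        have := Real.pi_pos
        nlinarith
      have : (2 * m : ℤ) = -1 := by exact_mod_cast h2m
      omega
    · rw [hn, hzero]; simp
    · exfalso
      have hzmem : z ∈ Metric.ball (0:ℂ) 1 := mem_ball_zero_iff.mpr hz
      have h0mem : (0:ℂ) ∈ Metric.ball (0:ℂ) 1 := mem_ball_zero_iff.mpr h0
      have himz : (L z).im = (L 0).im + n * (2 * Real.pi) := by
        rw [hn]; exact auxD_im _ n
      have hival := hpre.intermediate_value h0mem hzmem
        (Complex.continuous_im.comp_continuousOn hLcont)
      have hmemIcc : (L 0).im + Real.pi ∈ Set.Icc ((L 0).im) ((L z).im) := by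
        constructor
        · nlinarith [Real.pi_pos]
        · rw [himz]
          have : (1:ℝ) ≤ (n:ℝ) := by
            have h' : (1:ℤ) ≤ n := hpos
            exact_mod_cast h'
          nlinarith [Real.pi_pos]
      obtain ⟨w, hwmem, hw⟩ := hival hmemIcc
      obtain ⟨m, hm⟩ := hLim w (mem_ball_zero_iff.mp hwmem)
      simp only [Function.comp_apply] at hw
      have himw : (L w).im = (L 0).im + m * (2 * Real.pi) := by
        rw [hm]; exact auxD_im _ m
      rw [himw] at hw
      have h2m : (2 * m : ℝ) = 1 := by
        have := Real.pi_pos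
        nlinarith
      have : (2 * m : ℤ) = 1 := by exact_mod_cast h2m
      omega
  -- definition of ρ
  have hLdef : ∀ z : ℂ, L z = Complex.log (A z) + Complex.log (B z) - Complex.log (C z) :=
    fun z => rfl
  clear_value t A B C L c
  refine ⟨Complex.exp (t * L 0), ?_, ?_⟩
  · -- |ρ| = 1 : re (t * L 0) = (1/p) * re (L 0) and re (L 0) = 0
    have hre0 : (L 0).re = 0 := by
      have h1 : Real.exp ((L 0).re) = ‖Complex.exp (L 0)‖ := (Complex.norm_exp _).symm
      rw [hexpL 0 h0, hc] at h1
      rw [norm_mul, norm_mul, Complex.norm_conj, Complex.norm_conj, hl₁, hl₂, hl₃] at h1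
      norm_num at h1
      simpa using h1
    have htim : t.im = 0 := by
      rw [ht, one_div, ← Complex.ofReal_inv]
      exact Complex.ofReal_im _
    rw [Complex.norm_exp, Complex.mul_re, hre0, htim]
    norm_num
  · intro z hz
    rw [hAval z hz, hBval z hz, hCval z hz,
      Complex.cpow_def_of_ne_zero (hAne z hz), Complex.cpow_def_of_ne_zero (hBne z hz),
      Complex.cpow_def_of_ne_zero (hCne z hz), ← Complex.exp_add, ← Complex.exp_add]
    congr 1
    have hLz : Complex.log (A z) + Complex.log (B z) - Complex.log (C z) = L 0 :=
      (hLdef z).symm.trans (hLconst z hz)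
    rw [← hLz]
    ring
end

section
/- Let φ be a hyperbolic automorphism of D and let c ∈ D. Then ∑_{n=0}^∞ (1 − |φ^[n](c)|) < ∞; that is, the orbit (φ^[n](c)) is a Blaschke sequence. -/
/-- A (holomorphic) automorphism of the open unit disc `D = {z : |z| < 1}`:
a map of the form `z ↦ λ(z − a)/(1 − conj(a)·z)` with `a ∈ D` and `|λ| = 1`. -/
def IsDiscAut (φ : ℂ → ℂ) : Prop :=
  ∃ a lam : ℂ, ‖a‖ < 1 ∧ ‖lam‖ = 1 ∧
    ∀ z : ℂ, φ z = lam * (z - a) / (1 - (starRingEnd ℂ) a * z)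

/-- An elliptic automorphism: `φ ≠ id` with a fixed point in the open disc. -/
def IsEllipticAut (φ : ℂ → ℂ) : Prop :=
  IsDiscAut φ ∧ φ ≠ id ∧ ∃ a : ℂ, ‖a‖ < 1 ∧ φ a = a

/-- A parabolic automorphism: `φ ≠ id` with exactly one fixed point in the closed disc,
lying on the unit circle. -/
def IsParabolicAut (φ : ℂ → ℂ) : Prop :=
  IsDiscAut φ ∧ φ ≠ id ∧ ∃ w : ℂ, ‖w‖ = 1 ∧
    {z : ℂ | ‖z‖ ≤ 1 ∧ φ z = z} = {w}

/-- A hyperbolic automorphism: `φ ≠ id` with exactly two fixed points in the closed disc,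
both on the unit circle. -/
def IsHyperbolicAut (φ : ℂ → ℂ) : Prop :=
  IsDiscAut φ ∧ φ ≠ id ∧ ∃ w₁ w₂ : ℂ, w₁ ≠ w₂ ∧
    ‖w₁‖ = 1 ∧ ‖w₂‖ = 1 ∧
    {z : ℂ | ‖z‖ ≤ 1 ∧ φ z = z} = {w₁, w₂}

/-- The parabolic automorphism `φ_c(z) = (1 + c − 2z)/(2c − (1 + c)z)` fixing `1`. -/
noncomputable def phiC (c : ℂ) : ℂ → ℂ := fun z => (1 + c - 2 * z) / (2 * c - (1 + c) * z)

/-- The hyperbolic automorphism `ψ_r(z) = (z − r)/(1 − r z)` fixing `−1` and `1`. -/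
noncomputable def psiR (r : ℝ) : ℂ → ℂ := fun z => (z - (r : ℂ)) / (1 - (r : ℂ) * z)

lemma aux_den_ne (a z : ℂ) (ha : ‖a‖ < 1) (hz : ‖z‖ ≤ 1) :
    1 - (starRingEnd ℂ) a * z ≠ 0 := by
  intro h
  have h1 : (1 : ℂ) = (starRingEnd ℂ) a * z := sub_eq_zero.mp h
  have := congrArg (‖·‖) h1
  simp [norm_mul] at this
  nlinarith [norm_nonneg z, norm_nonneg a]

lemma aux_normsq (a z : ℂ) :
    Complex.normSq (1 - (starRingEnd ℂ) a * z) - Complex.normSq (z - a)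
      = (1 - Complex.normSq a) * (1 - Complex.normSq z) := by
  simp [Complex.normSq_apply, Complex.mul_re, Complex.mul_im]
  ring

lemma aux_map (a lam z : ℂ) (ha : ‖a‖ < 1) (hlam : ‖lam‖ = 1)
    (hz : ‖z‖ < 1) :
    ‖lam * (z - a) / (1 - (starRingEnd ℂ) a * z)‖ < 1 := by
  have hd : 1 - (starRingEnd ℂ) a * z ≠ 0 := aux_den_ne a z ha hz.le
  have hdpos : 0 < ‖1 - (starRingEnd ℂ) a * z‖ := by
    simpa [norm_pos_iff] using hd
  rw [norm_div, norm_mul, hlam, one_mul, div_lt_one hdpos]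
  have h1 : Complex.normSq (z - a) < Complex.normSq (1 - (starRingEnd ℂ) a * z) := by
    have := aux_normsq a z
    have ha2 : Complex.normSq a < 1 := by
      rw [← Complex.sq_norm] at *; nlinarith [norm_nonneg a]
    have hz2 : Complex.normSq z < 1 := by
      rw [← Complex.sq_norm] at *; nlinarith [norm_nonneg z]
    nlinarith
  have := Real.sqrt_lt_sqrt (Complex.normSq_nonneg _) h1
  simpa [Complex.norm_def] using this

lemma main_lemma (φ : ℂ → ℂ) (a lam w₁ w₂ : ℂ) (ha : ‖a‖ < 1)
    (hlam : ‖lam‖ = 1)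
    (hφeq : ∀ z, φ z = lam * (z - a) / (1 - (starRingEnd ℂ) a * z))
    (h1 : ‖w₁‖ = 1) (h2 : ‖w₂‖ = 1)
    (hlam2 : lam = 1 - (starRingEnd ℂ) a * (w₁ + w₂))
    (hprod : lam * a = -((starRingEnd ℂ) a * w₁ * w₂))
    (hlt : ‖1 - (starRingEnd ℂ) a * w₂‖ < ‖1 - (starRingEnd ℂ) a * w₁‖)
    (c : ℂ) (hc : ‖c‖ < 1) :
    Summable (fun n : ℕ => 1 - ‖φ^[n] c‖) := by
  set A := (starRingEnd ℂ) a with hA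
  -- orbit stays in the disc
  have horb : ∀ n, ‖φ^[n] c‖ < 1 := by
    intro n
    induction n with
    | zero => simpa using hc
    | succ n ih =>
        rw [Function.iterate_succ_apply', hφeq]
        exact aux_map a lam _ ha hlam ih
  -- step identities
  have step : ∀ w z : ℂ, ‖z‖ < 1 →
      (φ z - w) * (1 - A * z) = lam * (z - a) - w * (1 - A * z) := by
    intro w z hz
    have hd : 1 - A * z ≠ 0 := aux_den_ne a z ha hz.le
    rw [hφeq]
    rw [sub_mul, div_mul_cancel₀ _ hd]
  have s1 : ∀ z : ℂ, ‖z‖ < 1 →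
      (φ z - w₁) * (1 - A * z) = (1 - A * w₂) * (z - w₁) := by
    intro z hz
    rw [step w₁ z hz]
    linear_combination z * hlam2 - hprod
  have s2 : ∀ z : ℂ, ‖z‖ < 1 →
      (φ z - w₂) * (1 - A * z) = (1 - A * w₁) * (z - w₂) := by
    intro z hz
    rw [step w₂ z hz]
    linear_combination z * hlam2 - hprod
  set μ₁ := 1 - A * w₂ with hμ₁def
  set μ₂ := 1 - A * w₁ with hμ₂def
  -- invariant
  have inv : ∀ n : ℕ, μ₂ ^ n * (φ^[n] c - w₁) * (c - w₂)
      = μ₁ ^ n * (c - w₁) * (φ^[n] c - w₂) := by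
    intro n
    induction n with
    | zero => simp [Function.iterate_zero_apply, mul_comm]
    | succ n ih =>
        have hz := horb n
        have hd : 1 - A * (φ^[n] c) ≠ 0 := aux_den_ne a _ ha hz.le
        have e1 := s1 (φ^[n] c) hz
        have e2 := s2 (φ^[n] c) hz
        rw [Function.iterate_succ_apply']
        apply mul_right_cancel₀ hd
        linear_combination (μ₂ ^ (n+1) * (c - w₂)) * e1 - (μ₁ ^ (n+1) * (c - w₁)) * e2
          + (μ₁ * μ₂) * ih
  -- numeric bound
  have hμ₂ne : μ₂ ≠ 0 := aux_den_ne a w₁ ha h1.le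
  have hm2pos : 0 < ‖μ₂‖ := by simpa [norm_pos_iff] using hμ₂ne
  have hcw₂ : c - w₂ ≠ 0 := by
    intro h
    have : c = w₂ := sub_eq_zero.mp h
    rw [this, h2] at hc; exact lt_irrefl 1 hc
  have hcwpos : 0 < ‖c - w₂‖ := by simpa [norm_pos_iff] using hcw₂
  set r : ℝ := ‖μ₁‖ / ‖μ₂‖ with hrdef
  set K : ℝ := 2 * ‖c - w₁‖ / ‖c - w₂‖ with hKdef
  have hr0 : 0 ≤ r := div_nonneg (norm_nonneg _) (norm_nonneg _)
  have hr1 : r < 1 := (div_lt_one hm2pos).mpr hlt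
  have hbound : ∀ n : ℕ, 1 - ‖φ^[n] c‖ ≤ K * r ^ n := by
    intro n
    have heq : ‖μ₂‖ ^ n * ‖φ^[n] c - w₁‖ * ‖c - w₂‖
        = ‖μ₁‖ ^ n * ‖c - w₁‖ * ‖φ^[n] c - w₂‖ := by
      have := congrArg (‖·‖) (inv n)
      simpa [norm_mul, norm_pow] using this
    have htri : 1 - ‖φ^[n] c‖ ≤ ‖φ^[n] c - w₁‖ := by
      have t1 : ‖w₁‖ ≤ ‖w₁ - φ^[n] c‖ + ‖φ^[n] c‖ := by
        simpa using norm_add_le (w₁ - φ^[n] c) (φ^[n] c)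
      have t2 : ‖w₁ - φ^[n] c‖ = ‖φ^[n] c - w₁‖ :=
        norm_sub_rev w₁ (φ^[n] c)
      rw [t2] at t1
      linarith [h1 ▸ t1]
    have hzw2 : ‖φ^[n] c - w₂‖ ≤ 2 := by
      have h3 := (horb n).le
      calc ‖φ^[n] c - w₂‖ = ‖φ^[n] c + -w₂‖ := by ring_nf
        _ ≤ ‖φ^[n] c‖ + ‖-w₂‖ := norm_add_le _ _
        _ ≤ 2 := by simp [h2]; linarith
    have hzw1 : ‖φ^[n] c - w₁‖ ≤ K * r ^ n := by
      rw [hKdef, hrdef, div_pow]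
      rw [div_mul_div_comm]
      rw [le_div_iff₀ (by positivity)]
      have hm1n : (0:ℝ) ≤ ‖μ₁‖ ^ n := by positivity
      have hcw1 : (0:ℝ) ≤ ‖c - w₁‖ := norm_nonneg _
      nlinarith [heq, mul_nonneg hm1n hcw1]
    linarith
  apply Summable.of_nonneg_of_le (fun n => by linarith [horb n]) hbound
  exact (summable_geometric_of_lt_one hr0 hr1).mul_left K

lemma mu_ne (a lam w₁ w₂ : ℂ) (ha : ‖a‖ < 1) (ha0 : a ≠ 0)
    (hlam : ‖lam‖ = 1) (hw : w₁ ≠ w₂)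
    (h1 : ‖w₁‖ = 1) (h2 : ‖w₂‖ = 1)
    (hlam2 : lam = 1 - (starRingEnd ℂ) a * (w₁ + w₂))
    (hprod : lam * a = -((starRingEnd ℂ) a * w₁ * w₂)) :
    ‖1 - (starRingEnd ℂ) a * w₂‖ ≠ ‖1 - (starRingEnd ℂ) a * w₁‖ := by
  intro h
  set A := (starRingEnd ℂ) a with hA
  -- normSq expansions
  have hnw1 : Complex.normSq w₁ = 1 := by rw [Complex.normSq_eq_norm_sq, h1]; norm_num
  have hnw2 : Complex.normSq w₂ = 1 := by rw [Complex.normSq_eq_norm_sq, h2]; norm_num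
  have hexp : ∀ w : ℂ, Complex.normSq (1 - A * w)
      = 1 - 2 * (A * w).re + Complex.normSq a * Complex.normSq w := by
    intro w
    simp [hA, Complex.normSq_apply, Complex.mul_re, Complex.mul_im]
    ring
  have hsq : Complex.normSq (1 - A * w₂) = Complex.normSq (1 - A * w₁) := by
    rw [← Complex.sq_norm, ← Complex.sq_norm, h]
  rw [hexp w₁, hexp w₂, hnw1, hnw2] at hsq
  -- u := A * (w₁ - w₂) has re = 0
  set u := A * (w₁ - w₂) with hu
  have hure : u.re = 0 := by
    simp [Complex.mul_re] at hsq
    simp [hu, Complex.mul_re, Complex.sub_re, Complex.sub_im]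
    linarith
  have hune : u ≠ 0 := by
    apply mul_ne_zero
    · simpa [hA] using ha0
    · exact sub_ne_zero.mpr hw
  have huim : u.im ≠ 0 := by
    intro h0
    exact hune (Complex.ext hure h0)
  -- key identity
  have hll : lam * (starRingEnd ℂ) lam = 1 := by
    rw [Complex.mul_conj]
    norm_cast
    rw [Complex.normSq_eq_norm_sq, hlam]; norm_num
  set t : ℝ := 4 * Complex.normSq a - Complex.normSq (1 - lam) with ht
  have hcast : ((t : ℝ) : ℂ) = 4 * (a * A) - (1 - lam) * (1 - (starRingEnd ℂ) lam) := by
    rw [ht]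
    push_cast
    rw [← Complex.mul_conj, ← Complex.mul_conj]
    simp [hA, map_sub, map_one]
  have hkey : u ^ 2 = lam * ((t : ℝ) : ℂ) := by
    rw [hcast, hu]
    linear_combination (A * (w₁ + w₂) + 1 - lam) * hlam2 - 4 * A * hprod - (1 - lam) * hll
  -- take re and im
  have him : lam.im = 0 ∨ t = 0 := by
    have := congrArg Complex.im hkey
    simp [pow_two, Complex.mul_im, hure] at this
    tauto
  have hre : lam.re * t < 0 := by
    have := congrArg Complex.re hkey
    simp [pow_two, Complex.mul_re, hure] at this
    nlinarith [sq_nonneg u.im, huim, mul_self_pos.mpr huim]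
  have htne : t ≠ 0 := by intro h0; rw [h0] at hre; simp at hre
  have hlim : lam.im = 0 := by
    rcases him with h0 | h0
    · exact h0
    · exact absurd h0 htne
  have hnl : Complex.normSq lam = 1 := by rw [Complex.normSq_eq_norm_sq, hlam]; norm_num
  have hlre : lam.re = 1 ∨ lam.re = -1 := by
    have hrr : lam.re * lam.re = 1 := by
      rw [Complex.normSq_apply, hlim] at hnl
      nlinarith
    have hfac : (lam.re - 1) * (lam.re + 1) = 0 := by nlinarith
    rcases mul_eq_zero.mp hfac with h' | h'
    · left; linarith
    · right; linarith
  have hna : Complex.normSq a < 1 := by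
    rw [← Complex.sq_norm] at *
    nlinarith [norm_nonneg a]
  rcases hlre with h' | h'
  · -- lam = 1, t = 4 normSq a ≥ 0
    have : Complex.normSq (1 - lam) = 0 := by
      have : (1 : ℂ) - lam = 0 := by
        apply Complex.ext <;> simp [h', hlim]
      rw [this]; simp
    rw [ht] at hre
    rw [this] at hre
    nlinarith [Complex.normSq_nonneg a, h']
  · -- lam = -1
    have : Complex.normSq (1 - lam) = 4 := by
      have : (1 : ℂ) - lam = 2 := by
        apply Complex.ext <;> simp [h', hlim] <;> norm_num
      rw [this]; simp [Complex.normSq_apply]; norm_num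
    rw [ht, this] at hre
    nlinarith [h']

/-- For a hyperbolic automorphism `φ` of the disc and `c ∈ D`, the orbit
`(φ^[n] c)` is a Blaschke sequence: `∑ (1 − |φ^[n] c|) < ∞`. -/
theorem stmt_3 (φ : ℂ → ℂ) (hφ : IsHyperbolicAut φ) (c : ℂ) (hc : ‖c‖ < 1) :
    Summable (fun n : ℕ => 1 - ‖φ^[n] c‖) := by
  obtain ⟨⟨a, lam, ha, hlam, hφeq⟩, hne, w₁, w₂, hw, h1, h2, hset⟩ := hφ
  -- fixed-point equations
  have hmem : ∀ w : ℂ, w ∈ ({w₁, w₂} : Set ℂ) → ‖w‖ ≤ 1 ∧ φ w = w := by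
    intro w hwmem
    have : w ∈ {z : ℂ | ‖z‖ ≤ 1 ∧ φ z = z} := by rw [hset]; exact hwmem
    exact this
  have hfix1 := (hmem w₁ (Set.mem_insert _ _)).2
  have hfix2 := (hmem w₂ (Set.mem_insert_of_mem _ rfl)).2
  have hd1 : 1 - (starRingEnd ℂ) a * w₁ ≠ 0 := aux_den_ne a w₁ ha h1.le
  have hd2 : 1 - (starRingEnd ℂ) a * w₂ ≠ 0 := aux_den_ne a w₂ ha h2.le
  have f1 : lam * (w₁ - a) = w₁ * (1 - (starRingEnd ℂ) a * w₁) := by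
    have h' := hfix1
    rw [hφeq] at h'
    exact (div_eq_iff hd1).mp h'
  have f2 : lam * (w₂ - a) = w₂ * (1 - (starRingEnd ℂ) a * w₂) := by
    have h' := hfix2
    rw [hφeq] at h'
    exact (div_eq_iff hd2).mp h'
  have hwne : w₁ - w₂ ≠ 0 := sub_ne_zero.mpr hw
  -- a ≠ 0
  have ha0 : a ≠ 0 := by
    intro h0
    apply hne
    have hw1ne : w₁ ≠ 0 := by
      intro h'; rw [h'] at h1; simp at h1
    have hlam1 : lam = 1 := by
      rw [h0] at f1
      simp at f1
      have h'' : lam * w₁ = 1 * w₁ := by rw [f1]; ring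
      exact mul_right_cancel₀ hw1ne h''
    funext z
    rw [hφeq, h0, hlam1]
    simp
  -- Vieta-type relations
  have hlam2 : lam = 1 - (starRingEnd ℂ) a * (w₁ + w₂) := by
    apply mul_right_cancel₀ hwne
    linear_combination f1 - f2
  have hprod : lam * a = -((starRingEnd ℂ) a * w₁ * w₂) := by
    apply mul_right_cancel₀ hwne
    linear_combination w₂ * f1 - w₁ * f2
  have hne_abs := mu_ne a lam w₁ w₂ ha ha0 hlam hw h1 h2 hlam2 hprod
  rcases lt_or_gt_of_ne hne_abs with hlt | hlt
  · exact main_lemma φ a lam w₁ w₂ ha hlam hφeq h1 h2 hlam2 hprod hlt c hc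
  · refine main_lemma φ a lam w₂ w₁ ha hlam hφeq h2 h1 ?_ ?_ hlt c hc
    · rw [hlam2]; ring
    · rw [hprod]; ring
end

section
/- Let φ be an elliptic automorphism of D (φ ≠ id with a fixed point in D) and let ψ be any automorphism of D. If (b_n) is a sequence in D with ψ(φ^[n](b_n)) = 0 for all n ≥ 0, then (b_n) is not a Blaschke sequence; that is, ∑_{n=0}^∞ (1 − |b_n|) = ∞. -/

lemma aux_normSq_key (z w : ℂ) :
    Complex.normSq (1 - (starRingEnd ℂ) w * z) - Complex.normSq (z - w) =
      (1 - Complex.normSq z) * (1 - Complex.normSq w) := by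
  simp [Complex.normSq_apply, Complex.sub_re, Complex.sub_im, Complex.mul_re,
    Complex.mul_im, Complex.conj_re, Complex.conj_im, Complex.one_re, Complex.one_im]
  ring

lemma aux_denom_ne {w z : ℂ} (hw : ‖w‖ < 1) (hz : ‖z‖ < 1) :
    1 - (starRingEnd ℂ) w * z ≠ 0 := by
  intro h
  have h2 : (starRingEnd ℂ) w * z = 1 := by linear_combination -h
  have := congrArg (‖·‖) h2
  rw [norm_mul, Complex.norm_conj, norm_one] at this
  nlinarith [norm_nonneg w, norm_nonneg z]

lemma aux_maps_disc {a lam z : ℂ} (ha : ‖a‖ < 1) (hlam : ‖lam‖ = 1)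
    (hz : ‖z‖ < 1) :
    ‖lam * (z - a) / (1 - (starRingEnd ℂ) a * z)‖ < 1 := by
  rw [norm_div, norm_mul, hlam, one_mul]
  have hd : 1 - (starRingEnd ℂ) a * z ≠ 0 := aux_denom_ne ha hz
  have hd' : 0 < ‖1 - (starRingEnd ℂ) a * z‖ := by
    simpa [norm_pos_iff] using hd
  rw [div_lt_one hd']
  have key := aux_normSq_key z a
  have h1 : Complex.normSq z < 1 := by
    rw [← Complex.sq_norm]; nlinarith [norm_nonneg z]
  have h2 : Complex.normSq a < 1 := by
    rw [← Complex.sq_norm]; nlinarith [norm_nonneg a]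
  have : Complex.normSq (z - a) < Complex.normSq (1 - (starRingEnd ℂ) a * z) := by nlinarith
  rw [← Complex.sq_norm, ← Complex.sq_norm (1 - (starRingEnd ℂ) a * z)] at this
  nlinarith [norm_nonneg (z - a), norm_nonneg (1 - (starRingEnd ℂ) a * z)]

lemma aux_invariance {a lam z w : ℂ} (ha : ‖a‖ < 1) (hlam : ‖lam‖ = 1)
    (hz : ‖z‖ < 1) (hw : ‖w‖ < 1) :
    ‖lam * (z - a) / (1 - (starRingEnd ℂ) a * z)
        - lam * (w - a) / (1 - (starRingEnd ℂ) a * w)‖ * ‖1 - (starRingEnd ℂ) w * z‖ =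
      ‖z - w‖ * ‖1 - (starRingEnd ℂ) (lam * (w - a) / (1 - (starRingEnd ℂ) a * w))
        * (lam * (z - a) / (1 - (starRingEnd ℂ) a * z))‖ := by
  have hdz : 1 - (starRingEnd ℂ) a * z ≠ 0 := aux_denom_ne ha hz
  have hdw : 1 - (starRingEnd ℂ) a * w ≠ 0 := aux_denom_ne ha hw
  have hdw' : 1 - a * (starRingEnd ℂ) w ≠ 0 := by
    intro h
    apply hdw
    have := congrArg (starRingEnd ℂ) h
    simpa [map_sub, map_mul, Complex.conj_conj, mul_comm] using this
  have hlam2 : (starRingEnd ℂ) lam * lam = 1 := by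
    rw [mul_comm, Complex.mul_conj]
    norm_cast
    rw [Complex.normSq_eq_norm_sq, hlam]; norm_num
  have h1 : lam * (z - a) / (1 - (starRingEnd ℂ) a * z) - lam * (w - a) / (1 - (starRingEnd ℂ) a * w)
      = lam * (1 - a * (starRingEnd ℂ) a) * (z - w) / ((1 - (starRingEnd ℂ) a * z) * (1 - (starRingEnd ℂ) a * w)) := by
    rw [div_sub_div _ _ hdz hdw]
    ring
  have hD : (1 - a * (starRingEnd ℂ) w) * (1 - (starRingEnd ℂ) a * z) ≠ 0 := mul_ne_zero hdw' hdz
  have h2 : 1 - (starRingEnd ℂ) (lam * (w - a) / (1 - (starRingEnd ℂ) a * w))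
        * (lam * (z - a) / (1 - (starRingEnd ℂ) a * z))
      = (1 - a * (starRingEnd ℂ) a) * (1 - (starRingEnd ℂ) w * z)
        / ((1 - a * (starRingEnd ℂ) w) * (1 - (starRingEnd ℂ) a * z)) := by
    simp only [map_div₀, map_mul, map_sub, map_one, Complex.conj_conj]
    rw [div_mul_div_comm]
    rw [show (starRingEnd ℂ) lam * ((starRingEnd ℂ) w - (starRingEnd ℂ) a) * (lam * (z - a))
        = ((starRingEnd ℂ) lam * lam) * (((starRingEnd ℂ) w - (starRingEnd ℂ) a) * (z - a)) from by ring,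
      hlam2, one_mul]
    rw [eq_div_iff hD, sub_mul, div_mul_cancel₀ _ hD]
    ring
  rw [h1, h2]
  rw [norm_div, norm_div, norm_mul, norm_mul, norm_mul]
  have hconj : ‖1 - a * (starRingEnd ℂ) w‖ = ‖1 - (starRingEnd ℂ) a * w‖ := by
    rw [show 1 - a * (starRingEnd ℂ) w = (starRingEnd ℂ) (1 - (starRingEnd ℂ) a * w) from by
      simp [map_sub, map_mul], Complex.norm_conj]
  rw [hlam, one_mul, norm_mul, norm_mul, hconj]
  have hz1 : ‖1 - (starRingEnd ℂ) a * z‖ ≠ 0 := norm_ne_zero_iff.mpr hdz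
  have hw1 : ‖1 - (starRingEnd ℂ) a * w‖ ≠ 0 := norm_ne_zero_iff.mpr hdw
  field_simp

set_option maxHeartbeats 1000000 in
theorem stmt_4' (φ ψ : ℂ → ℂ)
    (hφd : ∃ a lam : ℂ, ‖a‖ < 1 ∧ ‖lam‖ = 1 ∧
      ∀ z : ℂ, φ z = lam * (z - a) / (1 - (starRingEnd ℂ) a * z))
    (p : ℂ) (hp : ‖p‖ < 1) (hfix : φ p = p)
    (hψ : ∃ a lam : ℂ, ‖a‖ < 1 ∧ ‖lam‖ = 1 ∧
      ∀ z : ℂ, ψ z = lam * (z - a) / (1 - (starRingEnd ℂ) a * z))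
    (b : ℕ → ℂ) (hb : ∀ n : ℕ, ‖b n‖ < 1)
    (hzero : ∀ n : ℕ, ψ (φ^[n] (b n)) = 0) :
    ¬ Summable (fun n : ℕ => 1 - ‖b n‖) := by
  obtain ⟨a, lam, ha, hlam, hform⟩ := hφd
  obtain ⟨c, mu, hc, hmu, hgform⟩ := hψ
  have hdisc : ∀ z, ‖z‖ < 1 → ‖φ z‖ < 1 := fun z hz => by
    rw [hform]; exact aux_maps_disc ha hlam hz
  have hiter : ∀ n z, ‖z‖ < 1 → ‖φ^[n] z‖ < 1 := by
    intro n
    induction n with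
    | zero => simpa using fun z hz => hz
    | succ k ih =>
      intro z hz
      rw [Function.iterate_succ_apply']
      exact hdisc _ (ih z hz)
  have hstep : ∀ z, ‖z‖ < 1 →
      ‖φ z - p‖ * ‖1 - (starRingEnd ℂ) p * z‖
        = ‖z - p‖ * ‖1 - (starRingEnd ℂ) p * φ z‖ := by
    intro z hz
    have := aux_invariance ha hlam hz hp
    rw [← hform, ← hform, hfix] at this
    exact this
  have hiterinv : ∀ n z, ‖z‖ < 1 →
      ‖φ^[n] z - p‖ * ‖1 - (starRingEnd ℂ) p * z‖
        = ‖z - p‖ * ‖1 - (starRingEnd ℂ) p * φ^[n] z‖ := by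
    intro n
    induction n with
    | zero => simp
    | succ k ih =>
      intro z hz
      have hu := hiter k z hz
      have hne : ‖1 - (starRingEnd ℂ) p * φ^[k] z‖ ≠ 0 :=
        norm_ne_zero_iff.mpr (aux_denom_ne hp hu)
      have s := hstep _ hu
      have I := ih z hz
      rw [Function.iterate_succ_apply']
      apply mul_left_cancel₀ hne
      linear_combination ‖1 - (starRingEnd ℂ) p * z‖ * s
        + ‖1 - (starRingEnd ℂ) p * φ (φ^[k] z)‖ * I
  have hun : ∀ n, φ^[n] (b n) = c := by
    intro n
    have h0 := hzero n
    rw [hgform] at h0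
    have hu := hiter n (b n) (hb n)
    have hd : 1 - (starRingEnd ℂ) c * φ^[n] (b n) ≠ 0 := aux_denom_ne hc hu
    rcases div_eq_zero_iff.mp h0 with h | h
    · rcases mul_eq_zero.mp h with h' | h'
      · exact absurd (congrArg (‖·‖) h') (by simp [hmu])
      · linear_combination h'
    · exact absurd h hd
  set P := ‖p‖ with hP
  set d := ‖c - p‖ with hd
  set e := ‖1 - (starRingEnd ℂ) p * c‖ with he
  clear_value P d e
  have hP1 : P < 1 := hp
  have hP0 : 0 ≤ P := hP ▸ norm_nonneg p
  have hePos : 0 < e := by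
    rw [he]
    exact norm_pos_iff.mpr (aux_denom_ne (hP ▸ hp) hc)
  have hkey0 : e ^ 2 - d ^ 2 = (1 - ‖c‖ ^ 2) * (1 - P ^ 2) := by
    rw [he, hd, hP]
    simp only [Complex.sq_norm]
    exact aux_normSq_key c p
  have hed : d ^ 2 < e ^ 2 := by
    have h1 : 0 < (1 - ‖c‖ ^ 2) * (1 - P ^ 2) :=
      mul_pos (by nlinarith [norm_nonneg c]) (by nlinarith)
    linarith [hkey0]
  have hbound : ∀ n, (1 - P) ^ 2 * (e ^ 2 - d ^ 2)
      ≤ (1 - ‖b n‖) * (2 * e ^ 2 * (1 - P ^ 2)) := by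
    intro n
    have hInv := hiterinv n (b n) (hb n)
    rw [hun n] at hInv
    rw [← hd, ← he] at hInv
    set A := ‖b n‖ with hA
    set Dn := ‖b n - p‖ with hDn
    set En := ‖1 - (starRingEnd ℂ) p * b n‖ with hEn
    clear_value A Dn En
    have hkey : En ^ 2 - Dn ^ 2 = (1 - A ^ 2) * (1 - P ^ 2) := by
      rw [hEn, hDn, hA, hP]
      simp only [Complex.sq_norm]
      exact aux_normSq_key (b n) p
    have hEnge : 1 - P ≤ En := by
      have h1 : ‖(starRingEnd ℂ) p * b n‖ ≤ P := by
        rw [norm_mul, Complex.norm_conj]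
        nlinarith [norm_nonneg p, norm_nonneg (b n), hb n]
      have h2 := norm_sub_norm_le 1 ((starRingEnd ℂ) p * b n)
      simp only [norm_one] at h2
      rw [hEn]; linarith
    have hA1 : A < 1 := hA ▸ hb n
    have hA0 : 0 ≤ A := hA ▸ norm_nonneg (b n)
    have hsq : d ^ 2 * En ^ 2 = Dn ^ 2 * e ^ 2 := by
      linear_combination (d * En + Dn * e) * hInv
    have h_en2 : (1 - P) ^ 2 ≤ En ^ 2 := by nlinarith [hEnge]
    have h_a : (1 - P) ^ 2 * (e ^ 2 - d ^ 2) ≤ En ^ 2 * (e ^ 2 - d ^ 2) :=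
      mul_le_mul_of_nonneg_right h_en2 (by linarith)
    have h_b : En ^ 2 * (e ^ 2 - d ^ 2) = e ^ 2 * (1 - A ^ 2) * (1 - P ^ 2) := by
      linear_combination e ^ 2 * hkey - hsq
    have h_c : e ^ 2 * (1 - A ^ 2) * (1 - P ^ 2) ≤ (1 - A) * (2 * e ^ 2 * (1 - P ^ 2)) := by
      nlinarith [mul_nonneg (mul_nonneg (sq_nonneg (1 - A)) (sq_nonneg e))
        (by nlinarith : (0:ℝ) ≤ 1 - P ^ 2)]
    linarith
  intro hs
  have hden : 0 < 2 * e ^ 2 * (1 - P ^ 2) :=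
    mul_pos (mul_pos two_pos (pow_pos hePos 2)) (by nlinarith)
  have hnum : 0 < (1 - P) ^ 2 * (e ^ 2 - d ^ 2) :=
    mul_pos (pow_pos (by linarith) 2) (by linarith)
  have hε : 0 < (1 - P) ^ 2 * (e ^ 2 - d ^ 2) / (2 * e ^ 2 * (1 - P ^ 2)) := div_pos hnum hden
  have htend := hs.tendsto_atTop_zero
  have hge : (1 - P) ^ 2 * (e ^ 2 - d ^ 2) / (2 * e ^ 2 * (1 - P ^ 2)) ≤ 0 := by
    apply ge_of_tendsto htend
    filter_upwards with n
    rw [div_le_iff₀ hden]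
    linarith [hbound n]
  linarith

/-- If `φ` is elliptic, `ψ` is any disc automorphism, and `(b_n)` in `D`
satisfies `ψ(φ^[n](b_n)) = 0` for all `n`, then `(b_n)` is not a Blaschke sequence. -/
theorem stmt_4 (φ ψ : ℂ → ℂ) (hφ : IsEllipticAut φ) (hψ : IsDiscAut ψ)
    (b : ℕ → ℂ) (hb : ∀ n : ℕ, ‖b n‖ < 1)
    (hzero : ∀ n : ℕ, ψ (φ^[n] (b n)) = 0) :
    ¬ Summable (fun n : ℕ => 1 - ‖b n‖) := by
  obtain ⟨hφd, _, p, hp, hfix⟩ := hφ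
  exact stmt_4' φ ψ hφd p hp hfix hψ b hb hzero
end

section
/- For c ∈ ℂ with |c| = 1 and c ≠ ±1, write φ_c(z) = (1 + c − 2z)/(2c − (1 + c)z), and for real r ∈ (−1,1) write ψ_r(z) = (z − r)/(1 − r z). If Im(c) > 0, then there exists r ∈ (−1,1) such that φ_c(z) = ψ_r(φ_i(ψ_{−r}(z))) for all z ∈ D; if Im(c) < 0, then there exists r ∈ (−1,1) such that φ_c(z) = ψ_r(φ_{−i}(ψ_{−r}(z))) for all z ∈ D. -/
lemma phiC_div (e a b : ℂ) (hb : b ≠ 0) :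
    phiC e (a / b) = ((1 + e) * b - 2 * a) / (2 * e * b - (1 + e) * a) := by
  have h1 : 1 + e - 2 * (a / b) = ((1 + e) * b - 2 * a) / b := by field_simp
  have h2 : 2 * e - (1 + e) * (a / b) = (2 * e * b - (1 + e) * a) / b := by
    field_simp
  show (1 + e - 2 * (a / b)) / (2 * e - (1 + e) * (a / b)) = _
  rw [h1, h2, div_div_div_cancel_right₀ hb]

lemma psiR_div (r : ℝ) (a b : ℂ) (hb : b ≠ 0) :
    psiR r (a / b) = (a - r * b) / (b - r * a) := by
  have h1 : a / b - (r : ℂ) = (a - r * b) / b := by field_simp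
  have h2 : 1 - (r : ℂ) * (a / b) = (b - r * a) / b := by field_simp
  show (a / b - (r : ℂ)) / (1 - (r : ℂ) * (a / b)) = _
  rw [h1, h2, div_div_div_cancel_right₀ hb]

lemma comp_eq (c e : ℂ) (r : ℝ) (hr1 : -1 < r) (hr2 : r < 1)
    (heabs : ‖e‖ = 1)
    (hne : Complex.normSq (1 + e) < 4)
    (hcabs : ‖c‖ = 1)
    (hc' : c * (1 - e * r) = e - r) :
    ∀ z : ℂ, ‖z‖ < 1 → phiC c z = psiR r (phiC e (psiR (-r) z)) := by
  -- `1 - e r ≠ 0`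
  have hu : (1 : ℂ) - e * r ≠ 0 := by
    intro h
    have h2 := hc'
    rw [h, mul_zero] at h2
    have he : e = (r : ℂ) := by linear_combination -h2
    rw [he] at h
    have h3 : (1 : ℝ) - r * r = 0 := by exact_mod_cast h
    nlinarith
  have hrne : (r : ℂ) ≠ 1 := by
    intro h
    have : (r : ℝ) = 1 := by exact_mod_cast h
    linarith
  have hfac : ((1 : ℂ) - r) * (1 - e * r) ≠ 0 :=
    mul_ne_zero (sub_ne_zero.mpr (Ne.symm hrne)) hu
  intro z hz
  have hznorm : z.re ^ 2 + z.im ^ 2 < 1 := by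
    have h1 : Complex.normSq z < 1 := by
      have := Complex.sq_norm z
      nlinarith [norm_nonneg z]
    rw [Complex.normSq_apply] at h1
    nlinarith
  -- `1 + r z ≠ 0`
  have hb1 : (1 : ℂ) + (r : ℂ) * z ≠ 0 := by
    intro h
    have h2 : (r : ℂ) * z = -1 := by linear_combination h
    have h3 : ‖(r : ℂ) * z‖ = 1 := by rw [h2]; simp
    rw [norm_mul, Complex.norm_real, Real.norm_eq_abs] at h3
    have h4 : |r| < 1 := abs_lt.mpr ⟨hr1, hr2⟩
    nlinarith [norm_nonneg z]
  -- key inequality |z + r| < |1 + r z|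
  have hlt : ‖z + (r : ℂ)‖ < ‖1 + (r : ℂ) * z‖ := by
    have h1 : Complex.normSq (z + (r : ℂ)) < Complex.normSq (1 + (r : ℂ) * z) := by
      simp only [Complex.normSq_apply, Complex.add_re, Complex.add_im, Complex.mul_re,
        Complex.mul_im, Complex.one_re, Complex.one_im, Complex.ofReal_re, Complex.ofReal_im]
      have key : 0 < (1 - r ^ 2) * (1 - z.re ^ 2 - z.im ^ 2) := by
        apply mul_pos <;> nlinarith
      nlinarith [key]
    have h2 := Complex.sq_norm (z + (r : ℂ))
    have h3 := Complex.sq_norm (1 + (r : ℂ) * z)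
    nlinarith [norm_nonneg (z + (r : ℂ)), norm_nonneg (1 + (r : ℂ) * z)]
  have step1 : psiR (-r) z = (z + (r : ℂ)) / (1 + (r : ℂ) * z) := by
    show (z - ((-r : ℝ) : ℂ)) / (1 - ((-r : ℝ) : ℂ) * z) = _
    push_cast
    ring_nf
  set A : ℂ := (1 + e) * (1 + (r : ℂ) * z) - 2 * (z + (r : ℂ)) with hA
  set B : ℂ := 2 * e * (1 + (r : ℂ) * z) - (1 + e) * (z + (r : ℂ)) with hB
  have hBne : B ≠ 0 := by
    intro h
    have h2 : 2 * e * (1 + (r : ℂ) * z) = (1 + e) * (z + (r : ℂ)) := by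
      rw [hB] at h; linear_combination h
    have h3 := congrArg norm h2
    rw [norm_mul, norm_mul, norm_mul] at h3
    have habs2 : ‖(2 : ℂ)‖ = 2 := by norm_num
    have he2 : ‖1 + e‖ < 2 := by
      have := Complex.sq_norm (1 + e)
      nlinarith [norm_nonneg (1 + e)]
    have hpos : 0 < ‖1 + (r : ℂ) * z‖ :=
      norm_pos_iff.mpr hb1
    rw [habs2, heabs, mul_one] at h3
    nlinarith [norm_nonneg (1 + e), norm_nonneg (z + (r : ℂ)),
      mul_le_mul_of_nonneg_left hlt.le (norm_nonneg (1 + e)),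
      mul_pos (sub_pos.mpr he2) hpos]
  have step2 : phiC e (psiR (-r) z) = A / B := by
    rw [step1, phiC_div e _ _ hb1]
  have step3 : psiR r (phiC e (psiR (-r) z)) = (A - r * B) / (B - r * A) := by
    rw [step2, psiR_div r A B hBne]
  have hnum : A - (r : ℂ) * B = ((1 : ℂ) - r) * (1 - e * r) * (1 + c - 2 * z) := by
    rw [hA, hB]
    linear_combination (-(1 - (r : ℂ))) * hc'
  have hden : B - (r : ℂ) * A = ((1 : ℂ) - r) * (1 - e * r) * (2 * c - (1 + c) * z) := by
    rw [hA, hB]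
    linear_combination (-(1 - (r : ℂ)) * (2 - z)) * hc'
  rw [step3, hnum, hden, mul_div_mul_left _ _ hfac]
  rfl

/-- For unimodular `c ≠ ±1`: if `Im c > 0` then `φ_c = ψ_r ∘ φ_i ∘ ψ_{−r}` on
`D` for some `r ∈ (−1,1)`; if `Im c < 0` then `φ_c = ψ_r ∘ φ_{−i} ∘ ψ_{−r}` on `D` for
some `r ∈ (−1,1)`. -/
theorem stmt_8 (c : ℂ) (hc : ‖c‖ = 1) (hc1 : c ≠ 1) (hc2 : c ≠ -1) :
    (0 < c.im → ∃ r : ℝ, -1 < r ∧ r < 1 ∧ ∀ z : ℂ, ‖z‖ < 1 →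
        phiC c z = psiR r (phiC Complex.I (psiR (-r) z))) ∧
    (c.im < 0 → ∃ r : ℝ, -1 < r ∧ r < 1 ∧ ∀ z : ℂ, ‖z‖ < 1 →
        phiC c z = psiR r (phiC (-Complex.I) (psiR (-r) z))) := by
  have hns : c.re ^ 2 + c.im ^ 2 = 1 := by
    have h1 : Complex.normSq c = 1 := by
      have := Complex.sq_norm c
      rw [hc] at this
      nlinarith
    rw [Complex.normSq_apply] at h1
    nlinarith
  constructor
  · intro him
    set r : ℝ := -c.re / (1 + c.im) with hrdef
    have hy : (0 : ℝ) < 1 + c.im := by linarith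
    have hre1 : c.re < 1 + c.im := by nlinarith
    have hre2 : -(1 + c.im) < c.re := by nlinarith
    have hr1 : -1 < r := by rw [hrdef, lt_div_iff₀ hy]; nlinarith
    have hr2 : r < 1 := by rw [hrdef, div_lt_iff₀ hy]; nlinarith
    refine ⟨r, hr1, hr2, ?_⟩
    have hc' : c * (1 - Complex.I * (r : ℂ)) = Complex.I - (r : ℂ) := by
      have hrr : (r : ℝ) * (1 + c.im) = -c.re := by
        rw [hrdef]; field_simp
      have hrrC : (r : ℂ) * (1 + (c.im : ℂ)) = -(c.re : ℂ) := by exact_mod_cast hrr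
      have hcxy : (c.re : ℂ) + (c.im : ℂ) * Complex.I = c := Complex.re_add_im c
      have hnsC : (c.re : ℂ) ^ 2 + (c.im : ℂ) ^ 2 = 1 := by exact_mod_cast hns
      have hyC : ((1 : ℂ) + (c.im : ℂ)) ≠ 0 := by
        intro h
        have : (1 : ℝ) + c.im = 0 := by exact_mod_cast h
        linarith
      rw [Complex.ext_iff]
      simp only [Complex.mul_re, Complex.mul_im, Complex.sub_re, Complex.sub_im,
        Complex.one_re, Complex.one_im, Complex.I_re, Complex.I_im, Complex.ofReal_re,
        Complex.ofReal_im, mul_zero, mul_one, zero_mul, one_mul, zero_sub, sub_zero,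
        zero_add, sub_self]
      constructor
      · rw [hrdef]; field_simp; nlinarith [hns]
      · rw [hrdef]; field_simp; nlinarith [hns]
    exact comp_eq c Complex.I r hr1 hr2 (by simp)
      (by simp [Complex.normSq_apply]; norm_num) hc hc'
  · intro him
    set r : ℝ := -c.re / (1 - c.im) with hrdef
    have hy : (0 : ℝ) < 1 - c.im := by linarith
    have hre1 : c.re < 1 - c.im := by nlinarith
    have hre2 : -(1 - c.im) < c.re := by nlinarith
    have hr1 : -1 < r := by rw [hrdef, lt_div_iff₀ hy]; nlinarith
    have hr2 : r < 1 := by rw [hrdef, div_lt_iff₀ hy]; nlinarith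
    refine ⟨r, hr1, hr2, ?_⟩
    have hc' : c * (1 - (-Complex.I) * (r : ℂ)) = -Complex.I - (r : ℂ) := by
      have hrr : (r : ℝ) * (1 - c.im) = -c.re := by
        rw [hrdef]; field_simp
      have hrrC : (r : ℂ) * (1 - (c.im : ℂ)) = -(c.re : ℂ) := by exact_mod_cast hrr
      have hcxy : (c.re : ℂ) + (c.im : ℂ) * Complex.I = c := Complex.re_add_im c
      have hnsC : (c.re : ℂ) ^ 2 + (c.im : ℂ) ^ 2 = 1 := by exact_mod_cast hns
      have hyC : ((1 : ℂ) - (c.im : ℂ)) ≠ 0 := by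
        intro h
        have : (1 : ℝ) - c.im = 0 := by exact_mod_cast h
        linarith
      rw [Complex.ext_iff]
      simp only [Complex.mul_re, Complex.mul_im, Complex.sub_re, Complex.sub_im,
        Complex.neg_re, Complex.neg_im, Complex.one_re, Complex.one_im, Complex.I_re,
        Complex.I_im, Complex.ofReal_re, Complex.ofReal_im, mul_zero, mul_one, zero_mul,
        one_mul, zero_sub, sub_zero, zero_add, sub_self, neg_zero, neg_neg]
      constructor
      · rw [hrdef]; field_simp; nlinarith [hns]
      · rw [hrdef]; field_simp; nlinarith [hns]
    exact comp_eq c (-Complex.I) r hr1 hr2 (by simp)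
      (by simp [Complex.normSq_apply]; norm_num) hc hc'
end

section
/- Let φ_i(z) = (1 + i − 2z)/(2i − (1 + i)z) and φ_{−i}(z) = (1 − i − 2z)/(−2i − (1 − i)z). For n ≥ 1 the points a_n = n/(n − i) and a'_n = n/(n + i) lie in D and satisfy φ_i^[n](a_n) = 0 and φ_{−i}^[n](a'_n) = 0, and both (a_n) and (a'_n) are Blaschke sequences: ∑_{n=1}^∞ (1 − |a_n|) < ∞ and ∑_{n=1}^∞ (1 − |a'_n|) < ∞. -/
lemma ne_sub (n : ℕ) : ((n:ℂ) - Complex.I) ≠ 0 := by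
  intro h; have := congrArg Complex.im h; simp at this

lemma ne_add (n : ℕ) : ((n:ℂ) + Complex.I) ≠ 0 := by
  intro h; have := congrArg Complex.im h; simp at this

lemma abs_sub_eq (n : ℕ) : ‖(n:ℂ) - Complex.I‖ = Real.sqrt ((n:ℝ)^2 + 1) := by
  rw [Complex.norm_def]; congr 1; simp [Complex.normSq_apply]; ring

lemma abs_add_eq (n : ℕ) : ‖(n:ℂ) + Complex.I‖ = Real.sqrt ((n:ℝ)^2 + 1) := by
  rw [Complex.norm_def]; congr 1; simp [Complex.normSq_apply]; ring

lemma absA (n : ℕ) : ‖(n:ℂ) / ((n:ℂ) - Complex.I)‖ = (n:ℝ) / Real.sqrt ((n:ℝ)^2 + 1) := by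
  rw [norm_div, abs_sub_eq, Complex.norm_natCast]

lemma absA' (n : ℕ) : ‖(n:ℂ) / ((n:ℂ) + Complex.I)‖ = (n:ℝ) / Real.sqrt ((n:ℝ)^2 + 1) := by
  rw [norm_div, abs_add_eq, Complex.norm_natCast]

lemma real_lt (x : ℝ) (hx : 0 ≤ x) : x / Real.sqrt (x^2 + 1) < 1 := by
  have hpos : 0 < Real.sqrt (x^2+1) := Real.sqrt_pos.mpr (by positivity)
  rw [div_lt_one hpos]
  nlinarith [Real.sq_sqrt (show (0:ℝ) ≤ x^2+1 by positivity), Real.sqrt_nonneg (x^2+1)]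

lemma real_bound (x : ℝ) (hx : 0 < x) : 1 - x / Real.sqrt (x^2 + 1) ≤ 1 / x^2 := by
  set s : ℝ := Real.sqrt (x^2 + 1) with hs
  have hs2 : s^2 = x^2 + 1 := Real.sq_sqrt (by positivity)
  have hspos : 0 < s := Real.sqrt_pos.mpr (by positivity)
  have hxs : x ≤ s := by nlinarith
  rw [show (1:ℝ) - x/s = (s - x)/s by field_simp, div_le_div_iff₀ hspos (by positivity)]
  nlinarith

lemma step (n : ℕ) : phiC Complex.I (((n:ℂ)+1) / (((n:ℂ)+1) - Complex.I)) = (n:ℂ) / ((n:ℂ) - Complex.I) := by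
  unfold phiC
  have hq : (((n:ℂ)+1) - Complex.I) ≠ 0 := by
    intro h; have := congrArg Complex.im h; simp at this
  have hB : (2*Complex.I*(((n:ℂ)+1) - Complex.I) - (1+Complex.I)*((n:ℂ)+1)) ≠ 0 := by
    intro h; have := congrArg Complex.im h; simp at this
    nlinarith [Nat.cast_nonneg (α := ℝ) n, this]
  have e1 : (1 + Complex.I - 2 * (((n:ℂ)+1) / (((n:ℂ)+1) - Complex.I)))
      = ((1+Complex.I)*(((n:ℂ)+1) - Complex.I) - 2*((n:ℂ)+1)) / (((n:ℂ)+1) - Complex.I) := by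
    field_simp
  have e2 : (2 * Complex.I - (1 + Complex.I) * (((n:ℂ)+1) / (((n:ℂ)+1) - Complex.I)))
      = (2*Complex.I*(((n:ℂ)+1) - Complex.I) - (1+Complex.I)*((n:ℂ)+1)) / (((n:ℂ)+1) - Complex.I) := by
    field_simp
  rw [e1, e2, div_div_div_cancel_right₀ hq, div_eq_div_iff hB (ne_sub n)]
  linear_combination Complex.I * Complex.I_sq

lemma step' (n : ℕ) : phiC (-Complex.I) (((n:ℂ)+1) / (((n:ℂ)+1) + Complex.I)) = (n:ℂ) / ((n:ℂ) + Complex.I) := by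
  unfold phiC
  have hq : (((n:ℂ)+1) + Complex.I) ≠ 0 := by
    intro h; have := congrArg Complex.im h; simp at this
  have hB : (2*(-Complex.I)*(((n:ℂ)+1) + Complex.I) - (1+(-Complex.I))*((n:ℂ)+1)) ≠ 0 := by
    intro h; have := congrArg Complex.im h; simp at this
    nlinarith [Nat.cast_nonneg (α := ℝ) n, this]
  have e1 : (1 + (-Complex.I) - 2 * (((n:ℂ)+1) / (((n:ℂ)+1) + Complex.I)))
      = ((1+(-Complex.I))*(((n:ℂ)+1) + Complex.I) - 2*((n:ℂ)+1)) / (((n:ℂ)+1) + Complex.I) := by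
    field_simp
  have e2 : (2 * (-Complex.I) - (1 + (-Complex.I)) * (((n:ℂ)+1) / (((n:ℂ)+1) + Complex.I)))
      = (2*(-Complex.I)*(((n:ℂ)+1) + Complex.I) - (1+(-Complex.I))*((n:ℂ)+1)) / (((n:ℂ)+1) + Complex.I) := by
    field_simp
  rw [e1, e2, div_div_div_cancel_right₀ hq, div_eq_div_iff hB (ne_add n)]
  linear_combination (-Complex.I) * Complex.I_sq

lemma iter (n : ℕ) : (phiC Complex.I)^[n] ((n : ℂ) / ((n : ℂ) - Complex.I)) = 0 := by
  induction n with
  | zero => simp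
  | succ k ih =>
    rw [Function.iterate_succ_apply]
    rw [show ((k+1 : ℕ) : ℂ) = (k:ℂ) + 1 by push_cast; ring, step k]
    exact ih

lemma iter' (n : ℕ) : (phiC (-Complex.I))^[n] ((n : ℂ) / ((n : ℂ) + Complex.I)) = 0 := by
  induction n with
  | zero => simp
  | succ k ih =>
    rw [Function.iterate_succ_apply]
    rw [show ((k+1 : ℕ) : ℂ) = (k:ℂ) + 1 by push_cast; ring, step' k]
    exact ih

lemma sq_summ : Summable (fun n : ℕ => 1 / ((n:ℝ)+1)^2) := by
  have h : Summable (fun n : ℕ => 1 / ((n:ℝ)) ^ 2) := Real.summable_one_div_nat_pow.mpr one_lt_two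
  refine ((summable_nat_add_iff 1).mpr h).congr fun n => ?_
  push_cast; ring

lemma sum_main : Summable (fun n : ℕ => 1 - (n:ℝ) / Real.sqrt ((n:ℝ)^2 + 1)) := by
  rw [← summable_nat_add_iff 1]
  refine Summable.of_nonneg_of_le (fun n => ?_) (fun n => ?_) sq_summ
  · have h := real_lt ((n:ℝ)+1) (by positivity)
    push_cast
    linarith
  · have h := real_bound ((n:ℝ)+1) (by positivity)
    push_cast
    linarith

/-- For `n ≥ 1`, `a_n = n/(n − i)` and `a'_n = n/(n + i)` lie in `D`, satisfy
`φ_i^[n](a_n) = 0` and `φ_{−i}^[n](a'_n) = 0`, and both `(a_n)` and `(a'_n)` are Blaschke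
sequences. -/
theorem stmt_13 :
    (∀ n : ℕ, 1 ≤ n →
      ‖(n : ℂ) / ((n : ℂ) - Complex.I)‖ < 1 ∧
      ‖(n : ℂ) / ((n : ℂ) + Complex.I)‖ < 1 ∧
      (phiC Complex.I)^[n] ((n : ℂ) / ((n : ℂ) - Complex.I)) = 0 ∧
      (phiC (-Complex.I))^[n] ((n : ℂ) / ((n : ℂ) + Complex.I)) = 0) ∧
    Summable (fun n : ℕ => 1 - ‖(n : ℂ) / ((n : ℂ) - Complex.I)‖) ∧
    Summable (fun n : ℕ => 1 - ‖(n : ℂ) / ((n : ℂ) + Complex.I)‖) := by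
  refine ⟨fun n _ => ⟨?_, ?_, iter n, iter' n⟩, ?_, ?_⟩
  · rw [absA]; exact real_lt _ (Nat.cast_nonneg n)
  · rw [absA']; exact real_lt _ (Nat.cast_nonneg n)
  · exact sum_main.congr fun n => by rw [absA]
  · exact sum_main.congr fun n => by rw [absA']
end
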